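/- Let K ≥ 1 and k ≥ 1 be integers and η ∈ (0, 1/(2k)]. Let ν, ω : Fin K → [0,∞) satisfy ν(x) ≤ ω(x) for all x, Σ_x ν(x) ≤ 1, and Σ_x (ω(x) − ν(x)) ≤ η. For j = 1,…,k let f_j, g_j : Fin K × Fin K → [0,∞) satisfy f_j(x,x') ≤ g_j(x,x') for all x, x', Σ_{x'} f_j(x,x') = 1 − η and Σ_{x'} g_j(x,x') = 1 + η for all x, and Σ_{x'} |g_j(x,x') − f_j(x,x')| ≤ 3η for all x. Then Σ_{x ∈ Fin K} | (ν f_1 ⋯ f_k)(x) − (ω g_1 ⋯ g_k)(x) | ≤ 7 k η, where (ν f_1 ⋯ f_k)(x) denotes the x-coordinate of the row vector obtained by multiplying ν successively on the right by the matrices f_1,…,f_k, and similarly for ω and the g_j. -/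

import Mathlib

open Finset

/-- Iterated right multiplication of a row vector `ν : Fin K → ℝ` by the matrices
`f 1, f 2, …, f j`: `rowIter ν f j = ν f₁ ⋯ f_j`, where `(z m)(x) = Σ_{x'} z(x') m(x', x)`. -/
noncomputable def rowIter {K : ℕ} (ν : Fin K → ℝ) (f : ℕ → Fin K → Fin K → ℝ) :
    ℕ → Fin K → ℝ
  | 0 => ν
  | (j + 1) => fun x => ∑ x', rowIter ν f j x' * f (j + 1) x' x

set_option maxHeartbeats 800000 in
/-- Propagation of bracket sizes through products of sub/super-stochastic matrices:
`Σ_x |(ν f₁ ⋯ f_k)(x) − (ω g₁ ⋯ g_k)(x)| ≤ 7 k η`. -/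
theorem stmt9 (K k : ℕ) (hK : 1 ≤ K) (hk : 1 ≤ k)
    (η : ℝ) (hη0 : 0 < η) (hη : η ≤ 1 / (2 * k))
    (ν ω : Fin K → ℝ) (hν0 : ∀ x, 0 ≤ ν x) (hω0 : ∀ x, 0 ≤ ω x)
    (hνω : ∀ x, ν x ≤ ω x)
    (hνsum : ∑ x, ν x ≤ 1) (hdiff : ∑ x, (ω x - ν x) ≤ η)
    (f g : ℕ → Fin K → Fin K → ℝ)
    (hf0 : ∀ j, 1 ≤ j → j ≤ k → ∀ x x', 0 ≤ f j x x')
    (hg0 : ∀ j, 1 ≤ j → j ≤ k → ∀ x x', 0 ≤ g j x x')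
    (hfg : ∀ j, 1 ≤ j → j ≤ k → ∀ x x', f j x x' ≤ g j x x')
    (hfsum : ∀ j, 1 ≤ j → j ≤ k → ∀ x, ∑ x', f j x x' = 1 - η)
    (hgsum : ∀ j, 1 ≤ j → j ≤ k → ∀ x, ∑ x', g j x x' = 1 + η)
    (habs : ∀ j, 1 ≤ j → j ≤ k → ∀ x, ∑ x', |g j x x' - f j x x'| ≤ 3 * η) :
    ∑ x, |rowIter ν f k x - rowIter ω g k x| ≤ 7 * k * η := by
  have hkpos : (0:ℝ) < k := by exact_mod_cast hk
  have hkη : (k:ℝ) * η ≤ 1/2 := by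
    have h2k : (0:ℝ) < 2 * k := by positivity
    rw [le_div_iff₀ h2k] at hη
    nlinarith
  have hη1 : η ≤ 1/2 := by
    have : (1:ℝ) ≤ k := by exact_mod_cast hk
    nlinarith
  -- pow bound : (1+η)^j * (1 - jη) ≤ 1
  have hpow : ∀ j : ℕ, (1+η)^j * (1 - (j:ℝ)*η) ≤ 1 := by
    intro j
    induction j with
    | zero => simp
    | succ j ih =>
      have h1 : (0:ℝ) ≤ (1+η)^j := by positivity
      calc (1+η)^(j+1) * (1 - ((j:ℕ)+1:ℕ)*η)
          = (1+η)^j * ((1+η)*(1 - ((j:ℝ)+1)*η)) := by push_cast; ring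
        _ ≤ (1+η)^j * (1 - (j:ℝ)*η) := by
            have h2 : (1+η)*(1 - ((j:ℝ)+1)*η) ≤ 1 - (j:ℝ)*η := by
              nlinarith [mul_nonneg (by positivity : (0:ℝ) ≤ (j:ℝ)+1) (sq_nonneg η)]
            exact mul_le_mul_of_nonneg_left h2 h1
        _ ≤ 1 := ih
  -- generic sum step lemma
  have sum_step : ∀ (z : Fin K → ℝ) (m : ℕ → Fin K → Fin K → ℝ) (j : ℕ) (c : ℝ),
      (∀ x, ∑ x', m (j+1) x x' = c) →
      ∑ x, rowIter z m (j+1) x = c * ∑ x', rowIter z m j x' := by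
    intro z m j c hc
    simp only [rowIter]
    rw [Finset.sum_comm]
    simp_rw [← Finset.mul_sum, hc]
    rw [← Finset.sum_mul, mul_comm]
  have main : ∀ j, j ≤ k →
      (∀ x, 0 ≤ rowIter ν f j x) ∧ (∀ x, rowIter ν f j x ≤ rowIter ω g j x) ∧
      (∑ x, rowIter ν f j x ≤ 1) ∧
      (∑ x, (rowIter ω g j x - rowIter ν f j x) ≤ (2*(j:ℝ)+1)*η*(1+η)^j) := by
    intro j
    induction j with
    | zero =>
      intro _
      refine ⟨hν0, hνω, hνsum, ?_⟩
      simpa [rowIter] using hdiff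
    | succ j ih =>
      intro hj
      obtain ⟨h0, hle, hsum, hD⟩ := ih (Nat.le_of_succ_le hj)
      have hj1 : 1 ≤ j + 1 := Nat.succ_le_succ (Nat.zero_le j)
      have hf0' := hf0 (j+1) hj1 hj
      have hg0' := hg0 (j+1) hj1 hj
      have hfg' := hfg (j+1) hj1 hj
      have hω0' : ∀ x, 0 ≤ rowIter ω g j x := fun x => le_trans (h0 x) (hle x)
      have new0 : ∀ x, 0 ≤ rowIter ν f (j+1) x := by
        intro x
        simp only [rowIter]
        exact Finset.sum_nonneg fun x' _ => mul_nonneg (h0 x') (hf0' x' x)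
      have newle : ∀ x, rowIter ν f (j+1) x ≤ rowIter ω g (j+1) x := by
        intro x
        simp only [rowIter]
        exact Finset.sum_le_sum fun x' _ =>
          mul_le_mul (hle x') (hfg' x' x) (hf0' x' x) (hω0' x')
      have hSν : ∑ x, rowIter ν f (j+1) x = (1-η) * ∑ x', rowIter ν f j x' :=
        sum_step ν f j (1-η) (hfsum (j+1) hj1 hj)
      have hSω : ∑ x, rowIter ω g (j+1) x = (1+η) * ∑ x', rowIter ω g j x' :=
        sum_step ω g j (1+η) (hgsum (j+1) hj1 hj)
      have hνjnn : (0:ℝ) ≤ ∑ x, rowIter ν f j x :=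
        Finset.sum_nonneg fun x _ => h0 x
      have newsum : ∑ x, rowIter ν f (j+1) x ≤ 1 := by
        rw [hSν]; nlinarith
      refine ⟨new0, newle, newsum, ?_⟩
      have hD' : ∑ x, (rowIter ω g (j+1) x - rowIter ν f (j+1) x)
          = (1+η) * ∑ x', rowIter ω g j x' - (1-η) * ∑ x', rowIter ν f j x' := by
        rw [Finset.sum_sub_distrib, hSν, hSω]
      rw [hD']
      set Sν := ∑ x', rowIter ν f j x' with hSνdef
      set Sω := ∑ x', rowIter ω g j x' with hSωdef
      have hD2 : Sω - Sν ≤ (2*(j:ℝ)+1)*η*(1+η)^j := by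
        rw [hSωdef, hSνdef, ← Finset.sum_sub_distrib]; exact hD
      have hP1 : (1:ℝ) ≤ (1+η)^(j+1) := one_le_pow₀ (by linarith)
      have t1 : (1+η) * (Sω - Sν) ≤ (1+η) * ((2*(j:ℝ)+1)*η*(1+η)^j) :=
        mul_le_mul_of_nonneg_left hD2 (by linarith)
      have t3 : (1+η) * ((2*(j:ℝ)+1)*η*(1+η)^j) = (2*(j:ℝ)+1)*η*(1+η)^(j+1) := by
        rw [pow_succ]; ring
      have t2 : 2*η*Sν ≤ 2*η := by nlinarith
      have t4 : 2*η ≤ 2*η*(1+η)^(j+1) := by nlinarith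
      have goal2 : (1+η) * Sω - (1-η) * Sν ≤ (2*(j:ℝ)+3)*η*(1+η)^(j+1) := by
        nlinarith [t1, t2, t3, t4]
      calc (1+η) * Sω - (1-η) * Sν ≤ (2*(j:ℝ)+3)*η*(1+η)^(j+1) := goal2
        _ = (2*((j:ℕ)+1:ℕ)+1)*η*(1+η)^(j+1) := by push_cast; ring
  obtain ⟨h0, hle, hsum, hD⟩ := main k le_rfl
  have hrw : ∀ x : Fin K, |rowIter ν f k x - rowIter ω g k x|
      = rowIter ω g k x - rowIter ν f k x := by
    intro x
    rw [abs_sub_comm, abs_of_nonneg (sub_nonneg.2 (hle x))]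
  rw [Finset.sum_congr rfl fun x _ => hrw x]
  have hpk : (1+η)^k ≤ 2 := by
    have h1 := hpow k
    have h2 : (0:ℝ) ≤ (1+η)^k := by positivity
    nlinarith
  have h1k : (1:ℝ) ≤ k := by exact_mod_cast hk
  calc ∑ x, (rowIter ω g k x - rowIter ν f k x) ≤ (2*(k:ℝ)+1)*η*(1+η)^k := hD
    _ ≤ (2*(k:ℝ)+1)*η*2 := mul_le_mul_of_nonneg_left hpk (by positivity)
    _ ≤ 7 * k * η := by
        have : (0:ℝ) ≤ (3*(k:ℝ)-2) * η := mul_nonneg (by linarith) hη0.le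
        nlinarith
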